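/- arXiv:1608.04685 — 2 statements merged into one kernel-verified Lean document; each statement's English description precedes it below -/
import Mathlib

section
/- For every κ > 0, the modulational instability index Δ(κ) = i₁(κ)·i₂(κ)·i₄(κ)/i₃(κ) is well defined (i₃(κ) ≠ 0) and has the same sign as i₄(κ): Δ(κ) < 0 if and only if i₄(κ) < 0, Δ(κ) > 0 if and only if i₄(κ) > 0, and Δ(κ) = 0 if and only if i₄(κ) = 0. -/
open Real Filter

lemma my_tanh_pos {k : ℝ} (hk : 0 < k) : 0 < Real.tanh k := by
  rw [Real.tanh_eq_sinh_div_cosh]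
  exact div_pos (Real.sinh_pos_iff.mpr hk) (Real.cosh_pos k)

lemma my_tanh_lt_one (k : ℝ) : Real.tanh k < 1 := by
  rw [Real.tanh_eq_sinh_div_cosh, div_lt_one (Real.cosh_pos k)]
  nlinarith [Real.cosh_sub_sinh k, Real.exp_pos (-k)]

lemma my_tanh_lt_self {k : ℝ} (hk : 0 < k) : Real.tanh k < k := by
  have hmono : StrictMonoOn (fun x => x * Real.cosh x - Real.sinh x) (Set.Ici 0) := by
    apply strictMonoOn_of_deriv_pos (convex_Ici 0)
    · exact ((continuous_id.mul Real.continuous_cosh).sub Real.continuous_sinh).continuousOn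
    · intro x hx
      rw [interior_Ici] at hx
      have h1 : HasDerivAt (fun x => x * Real.cosh x - Real.sinh x) (x * Real.sinh x) x := by
        have := ((hasDerivAt_id x).mul (Real.hasDerivAt_cosh x)).sub (Real.hasDerivAt_sinh x)
        exact this.congr_deriv (by simp)
      rw [h1.deriv]
      exact mul_pos hx (Real.sinh_pos_iff.mpr hx)
  have := hmono (Set.self_mem_Ici) (Set.mem_Ici.mpr hk.le) hk
  simp only [Real.cosh_zero, Real.sinh_zero] at this
  rw [Real.tanh_eq_sinh_div_cosh, div_lt_iff₀ (Real.cosh_pos k)]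
  nlinarith

lemma my_sech_bound {k : ℝ} (hk : 0 < k) : k * (1 - Real.tanh k ^ 2) < Real.tanh k := by
  have h2k : 2 * k < Real.sinh (2 * k) := Real.self_lt_sinh_iff.mpr (by linarith)
  rw [Real.sinh_two_mul] at h2k
  have hc := Real.cosh_pos k
  have hsq := Real.cosh_sq_sub_sinh_sq k
  rw [Real.tanh_eq_sinh_div_cosh]
  have h1 : 1 - (Real.sinh k / Real.cosh k) ^ 2 = 1 / Real.cosh k ^ 2 := by
    field_simp
    linarith
  rw [h1, mul_one_div, div_lt_div_iff₀ (by positivity) hc]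
  nlinarith

lemma my_hasDerivAt_tanh (x : ℝ) : HasDerivAt Real.tanh (1 - Real.tanh x ^ 2) x := by
  have h : HasDerivAt (fun y => Real.sinh y / Real.cosh y)
      ((Real.cosh x * Real.cosh x - Real.sinh x * Real.sinh x) / Real.cosh x ^ 2) x :=
    (Real.hasDerivAt_sinh x).div (Real.hasDerivAt_cosh x) (Real.cosh_pos x).ne'
  have he : (fun y => Real.sinh y / Real.cosh y) = Real.tanh :=
    funext fun y => (Real.tanh_eq_sinh_div_cosh y).symm
  rw [he] at h
  convert h using 1
  have hsq := Real.cosh_sq_sub_sinh_sq x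
  have hc := (Real.cosh_pos x).ne'
  rw [Real.tanh_eq_sinh_div_cosh]
  field_simp





/-- The water-wave phase speed `c_ww(k) = √(tanh k / k)` (normalized depth and gravity),
extended by `c_ww(0) = 1`. -/
noncomputable def cww (k : ℝ) : ℝ := if k = 0 then 1 else Real.sqrt (Real.tanh k / k)

/-- `i₁(κ) = (κ c_ww(κ))''`. -/
noncomputable def i1 (κ : ℝ) : ℝ := deriv (deriv (fun k : ℝ => k * cww k)) κ

/-- `i₂(κ) = ((κ c_ww(κ))')² − 1`. -/
noncomputable def i2 (κ : ℝ) : ℝ := (deriv (fun k : ℝ => k * cww k) κ) ^ 2 - 1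

/-- `i₃(κ) = c_ww²(κ) − c_ww²(2κ)`. -/
noncomputable def i3 (κ : ℝ) : ℝ := (cww κ) ^ 2 - (cww (2 * κ)) ^ 2

/-- `i₄(κ) = 3c_ww²(κ) + 5c_ww⁴(κ) − 2c_ww²(2κ)(c_ww²(κ)+2) + 18κ c_ww³(κ) c_ww'(κ)
+ κ²(c_ww'(κ))²(5c_ww²(κ) + 4c_ww²(2κ))`. -/
noncomputable def i4 (κ : ℝ) : ℝ :=
  3 * (cww κ) ^ 2 + 5 * (cww κ) ^ 4 - 2 * (cww (2 * κ)) ^ 2 * ((cww κ) ^ 2 + 2)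
    + 18 * κ * (cww κ) ^ 3 * deriv cww κ
    + κ ^ 2 * (deriv cww κ) ^ 2 * (5 * (cww κ) ^ 2 + 4 * (cww (2 * κ)) ^ 2)

/-- The modulational instability index `Δ(κ) = i₁(κ)·i₂(κ)·i₄(κ)/i₃(κ)`. -/
noncomputable def Δ (κ : ℝ) : ℝ := i1 κ * i2 κ / i3 κ * i4 κ

noncomputable def gN (k : ℝ) : ℝ := Real.tanh k + k * (1 - Real.tanh k ^ 2)
noncomputable def nD (k : ℝ) : ℝ := 2 * (1 - Real.tanh k ^ 2) * (1 - k * Real.tanh k)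
noncomputable def Gfun (k : ℝ) : ℝ := gN k / (2 * Real.sqrt (k * Real.tanh k))

lemma g_pos {k : ℝ} (hk : 0 < k) : 0 < k * Real.tanh k := mul_pos hk (my_tanh_pos hk)

lemma hasDerivAt_g (k : ℝ) : HasDerivAt (fun x => x * Real.tanh x) (gN k) k := by
  have := (hasDerivAt_id k).mul (my_hasDerivAt_tanh k)
  exact this.congr_deriv (by simp [gN])

lemma hasDerivAt_sqrtg {k : ℝ} (hk : 0 < k) :
    HasDerivAt (fun x => Real.sqrt (x * Real.tanh x)) (Gfun k) k :=
  (hasDerivAt_g k).sqrt (g_pos hk).ne'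

lemma cww_mul {k : ℝ} (hk : 0 < k) : k * cww k = Real.sqrt (k * Real.tanh k) := by
  rw [cww, if_neg hk.ne']
  rw [← Real.sqrt_sq hk.le, ← Real.sqrt_mul (sq_nonneg k)]
  congr 1
  field_simp
  rw [Real.sqrt_sq hk.le]
  ring

lemma eventually_eq_F {κ : ℝ} (hκ : 0 < κ) :
    (fun k : ℝ => k * cww k) =ᶠ[nhds κ] fun x => Real.sqrt (x * Real.tanh x) := by
  filter_upwards [Ioi_mem_nhds hκ] with k hk
  exact cww_mul hk

lemma derivF {k : ℝ} (hk : 0 < k) : deriv (fun k : ℝ => k * cww k) k = Gfun k := by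
  rw [Filter.EventuallyEq.deriv_eq (eventually_eq_F hk)]
  exact (hasDerivAt_sqrtg hk).deriv

lemma hasDerivAt_gN (k : ℝ) : HasDerivAt gN (nD k) k := by
  have := (my_hasDerivAt_tanh k).add
    ((hasDerivAt_id k).mul ((hasDerivAt_const k (1:ℝ)).sub ((my_hasDerivAt_tanh k).pow 2)))
  exact this.congr_deriv (by simp [nD]; ring)

lemma i1_lt_zero {κ : ℝ} (hκ : 0 < κ) : i1 κ < 0 := by
  have hev : deriv (fun k : ℝ => k * cww k) =ᶠ[nhds κ] Gfun := by
    filter_upwards [Ioi_mem_nhds hκ] with k hk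
    exact derivF hk
  set S := Real.sqrt (κ * Real.tanh κ) with hSdef
  have hS : 0 < S := Real.sqrt_pos.mpr (g_pos hκ)
  have hS2 : S ^ 2 = κ * Real.tanh κ := Real.sq_sqrt (g_pos hκ).le
  have hGd : HasDerivAt Gfun
      ((nD κ * (2 * S) - gN κ * (2 * Gfun κ)) / (2 * S) ^ 2) κ :=
    (hasDerivAt_gN κ).div ((hasDerivAt_sqrtg hκ).const_mul 2) (by positivity)
  have hi1 : i1 κ = (nD κ * (2 * S) - gN κ * (2 * Gfun κ)) / (2 * S) ^ 2 := by
    rw [i1, Filter.EventuallyEq.deriv_eq hev, hGd.deriv]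
  set t := Real.tanh κ with htdef
  have ht0 : 0 < t := my_tanh_pos hκ
  have ht1 : t < 1 := my_tanh_lt_one κ
  have hs : 0 < 1 - t ^ 2 := by nlinarith
  have hkey : 2 * nD κ * (κ * t) - gN κ ^ 2 < 0 := by
    rw [nD, gN, ← htdef]
    nlinarith [sq_nonneg (t - κ * (1 - t ^ 2)), mul_pos (mul_pos (mul_pos hκ hκ) (mul_pos ht0 ht0)) hs]
  have hprod : (nD κ * (2 * S) - gN κ * (2 * Gfun κ)) * S = 2 * nD κ * S ^ 2 - gN κ ^ 2 := by
    rw [Gfun, ← htdef, ← hSdef]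
    field_simp
  rw [hS2] at hprod
  have hnum : nD κ * (2 * S) - gN κ * (2 * Gfun κ) < 0 := by nlinarith
  rw [hi1]
  exact div_neg_of_neg_of_pos hnum (by positivity)

lemma i2_lt_zero {κ : ℝ} (hκ : 0 < κ) : i2 κ < 0 := by
  set S := Real.sqrt (κ * Real.tanh κ) with hSdef
  have hS : 0 < S := Real.sqrt_pos.mpr (g_pos hκ)
  have hS2 : S ^ 2 = κ * Real.tanh κ := Real.sq_sqrt (g_pos hκ).le
  set t := Real.tanh κ with htdef
  have ht0 : 0 < t := my_tanh_pos hκ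
  have ht1 : t < 1 := my_tanh_lt_one κ
  have htk : t < κ := my_tanh_lt_self hκ
  have hsb : κ * (1 - t ^ 2) < t := my_sech_bound hκ
  have hs : 0 < 1 - t ^ 2 := by nlinarith
  have hkey : gN κ ^ 2 < 4 * (κ * t) := by
    rw [gN, ← htdef]
    nlinarith [mul_pos hκ hs, mul_pos ht0 (mul_pos hκ hs)]
  have hG2 : Gfun κ ^ 2 = gN κ ^ 2 / (4 * (κ * t)) := by
    rw [Gfun, ← htdef, ← hSdef, div_pow, mul_pow]
    rw [hS2]
    norm_num
  rw [i2, derivF hκ]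
  rw [hG2]
  have h4 : 0 < 4 * (κ * t) := by positivity
  have := (div_lt_one h4).mpr hkey
  linarith

lemma cww_sq {k : ℝ} (hk : 0 < k) : cww k ^ 2 = Real.tanh k / k := by
  rw [cww, if_neg hk.ne']
  exact Real.sq_sqrt (div_nonneg (my_tanh_pos hk).le hk.le)

lemma i3_pos {κ : ℝ} (hκ : 0 < κ) : 0 < i3 κ := by
  rw [i3, cww_sq hκ, cww_sq (by linarith : (0:ℝ) < 2 * κ)]
  have key : Real.tanh (2 * κ) < 2 * Real.tanh κ := by
    have hc := Real.cosh_pos κ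
    have hc1 : 1 < Real.cosh κ := Real.one_lt_cosh.mpr hκ.ne'
    have hsp : 0 < Real.sinh κ := Real.sinh_pos_iff.mpr hκ
    rw [Real.tanh_eq_sinh_div_cosh, Real.tanh_eq_sinh_div_cosh, Real.sinh_two_mul,
      Real.cosh_two_mul, mul_div_assoc']
    rw [div_lt_div_iff₀ (by nlinarith) hc]
    nlinarith [mul_pos hsp (mul_pos hsp hsp)]
  rw [sub_pos, div_lt_div_iff₀ (by linarith) hκ]
  nlinarith [my_tanh_pos hκ]

/-- For every `κ > 0`, the modulational instability index `Δ(κ)` is well defined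
(`i₃(κ) ≠ 0`) and has the same sign as `i₄(κ)`. -/
theorem Delta_sign (κ : ℝ) (hκ : 0 < κ) :
    i3 κ ≠ 0 ∧
    (Δ κ < 0 ↔ i4 κ < 0) ∧
    (0 < Δ κ ↔ 0 < i4 κ) ∧
    (Δ κ = 0 ↔ i4 κ = 0) := by
  have h1 := i1_lt_zero hκ
  have h2 := i2_lt_zero hκ
  have h3 := i3_pos hκ
  have hP : 0 < i1 κ * i2 κ / i3 κ := div_pos (mul_pos_of_neg_of_neg h1 h2) h3
  have hΔ : Δ κ = i1 κ * i2 κ / i3 κ * i4 κ := rfl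
  refine ⟨h3.ne', ?_, ?_, ?_⟩
  · rw [hΔ]
    constructor
    · intro h
      by_contra hx
      push_neg at hx
      nlinarith [mul_nonneg hP.le hx]
    · exact fun h => mul_neg_of_pos_of_neg hP h
  · rw [hΔ]
    constructor
    · intro h
      by_contra hx
      push_neg at hx
      nlinarith [mul_nonpos_of_nonneg_of_nonpos hP.le hx]
    · exact fun h => mul_pos hP h
  · rw [hΔ, mul_eq_zero]
    simp [hP.ne']
end

section
/- Let κ > 0 and define ω(s,±) = s·(c_ww(κ) ± c_ww(κ s)) for s ∈ ℝ, where c_ww is extended evenly. Then for every integer n and every ξ ∈ (0, 1/2], both ω(n+ξ, +) ≠ 0 and ω(n+ξ, −) ≠ 0; that is, away from the zero Floquet exponent none of the eigenvalues i ω(n+ξ, ±) of the linearization about the rest state lies at the origin. -/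
open Real

lemma myHasDerivAt_tanh (x : ℝ) :
    HasDerivAt Real.tanh (1 / Real.cosh x ^ 2) x := by
  have h : HasDerivAt (fun y => Real.sinh y / Real.cosh y)
      ((Real.cosh x * Real.cosh x - Real.sinh x * Real.sinh x) / Real.cosh x ^ 2) x :=
    (Real.hasDerivAt_sinh x).div (Real.hasDerivAt_cosh x) (ne_of_gt (Real.cosh_pos x))
  have heq : Real.cosh x * Real.cosh x - Real.sinh x * Real.sinh x = 1 := by
    have := Real.cosh_sq_sub_sinh_sq x
    ring_nf
    ring_nf at this
    linarith
  have hfun : (fun y => Real.sinh y / Real.cosh y) = Real.tanh := by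
    funext y; rw [Real.tanh_eq_sinh_div_cosh]
  rw [hfun, heq] at h
  exact h

lemma tanh_strictConcave : StrictConcaveOn ℝ (Set.Ici (0:ℝ)) Real.tanh := by
  have hct : Continuous Real.tanh := by
    have h : Real.tanh = fun x => Real.sinh x / Real.cosh x :=
      funext fun x => Real.tanh_eq_sinh_div_cosh x
    rw [h]
    exact Real.continuous_sinh.div Real.continuous_cosh fun x => ne_of_gt (Real.cosh_pos x)
  apply StrictAntiOn.strictConcaveOn_of_deriv (convex_Ici 0) hct.continuousOn
  have hderiv : ∀ x : ℝ, deriv Real.tanh x = 1 / Real.cosh x ^ 2 :=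
    fun x => (myHasDerivAt_tanh x).deriv
  rw [interior_Ici]
  intro a ha b hb hab
  rw [hderiv, hderiv]
  have hca : 0 < Real.cosh a ^ 2 := pow_pos (Real.cosh_pos a) 2
  have hcb : Real.cosh a ^ 2 < Real.cosh b ^ 2 := by
    have : Real.cosh a < Real.cosh b := by
      rw [Real.cosh_lt_cosh]
      rw [abs_of_pos (Set.mem_Ioi.mp ha), abs_of_pos (lt_trans ha hab)]
      exact hab
    exact pow_lt_pow_left₀ this (le_of_lt (Real.cosh_pos a)) (by norm_num)
  exact one_div_lt_one_div_of_lt hca hcb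

lemma tanh_pos' {x : ℝ} (hx : 0 < x) : 0 < Real.tanh x := by
  rw [Real.tanh_eq_sinh_div_cosh]
  exact div_pos (by rwa [Real.sinh_pos_iff]) (Real.cosh_pos x)

/-- tanh k / k is strictly decreasing on (0,∞). -/
lemma tanh_div_strictAnti {a b : ℝ} (ha : 0 < a) (hab : a < b) :
    Real.tanh b / b < Real.tanh a / a := by
  have hb : 0 < b := lt_trans ha hab
  have key : (a / b) * Real.tanh b < Real.tanh a := by
    have h0 : (0:ℝ) ∈ Set.Ici (0:ℝ) := Set.mem_Ici.mpr le_rfl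
    have hbmem : b ∈ Set.Ici (0:ℝ) := le_of_lt hb
    have hne : (0:ℝ) ≠ b := ne_of_lt hb
    have hw1 : 0 < 1 - a / b := by
      rw [sub_pos]; exact (div_lt_one hb).mpr hab
    have hw2 : 0 < a / b := div_pos ha hb
    have hsum : (1 - a / b) + a / b = 1 := by ring
    have := tanh_strictConcave.2 h0 hbmem hne hw1 hw2 hsum
    simp only [smul_eq_mul, Real.tanh_zero, mul_zero, zero_add, mul_zero] at this
    have harg : a / b * b = a := div_mul_cancel₀ a (ne_of_gt hb)
    rw [harg] at this
    linarith [this]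
  rw [div_lt_div_iff₀ hb ha]
  calc Real.tanh b * a = b * ((a / b) * Real.tanh b) := by field_simp
    _ < b * Real.tanh a := by
        exact (mul_lt_mul_iff_right₀ hb).mpr key
    _ = Real.tanh a * b := by ring

lemma cww_pos (k : ℝ) : 0 < cww k := by
  unfold cww
  rcases eq_or_ne k 0 with h | h
  · simp [h]
  · rw [if_neg h]
    apply Real.sqrt_pos.mpr
    rcases lt_or_gt_of_ne h with hk | hk
    · have : Real.tanh k < 0 := by
        have := tanh_pos' (x := -k) (by linarith)
        rw [Real.tanh_neg] at this; linarith
      exact div_pos_of_neg_of_neg this hk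
    · exact div_pos (tanh_pos' hk) hk

lemma cww_even (k : ℝ) : cww (-k) = cww k := by
  unfold cww
  rcases eq_or_ne k 0 with h | h
  · simp [h]
  · rw [if_neg (by simpa using h), if_neg h, Real.tanh_neg, neg_div_neg_eq]

lemma cww_strictAnti {a b : ℝ} (ha : 0 < a) (hab : a < b) : cww b < cww a := by
  unfold cww
  rw [if_neg (ne_of_gt (lt_trans ha hab)), if_neg (ne_of_gt ha)]
  apply Real.sqrt_lt_sqrt
  · apply div_nonneg (le_of_lt (tanh_pos' (lt_trans ha hab))) (le_of_lt (lt_trans ha hab))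
  · exact tanh_div_strictAnti ha hab

/-- For `κ > 0` and nonzero Floquet exponent `ξ ∈ (0, 1/2]`, none of the eigenvalues
`i ω(n+ξ, ±)` of the linearization about the rest state lies at the origin, where
`ω(s,±) = s(c_ww(κ) ± c_ww(κ s))`. -/
theorem omega_ne_zero_of_floquet_pos (κ : ℝ) (hκ : 0 < κ) (n : ℤ)
    (ξ : ℝ) (hξ : ξ ∈ Set.Ioc (0 : ℝ) (1 / 2)) :
    ((n : ℝ) + ξ) * (cww κ + cww (κ * ((n : ℝ) + ξ))) ≠ 0 ∧
    ((n : ℝ) + ξ) * (cww κ - cww (κ * ((n : ℝ) + ξ))) ≠ 0 := by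
  obtain ⟨hξ0, hξ2⟩ := hξ
  set s : ℝ := (n : ℝ) + ξ with hs
  have hsne : s ≠ 0 := by
    intro h
    have hnz : (n : ℝ) = -ξ := by linarith [h]
    have h1 : n < 0 := by exact_mod_cast (show (n:ℝ) < 0 by linarith)
    have h2 : n ≤ -1 := by omega
    have h3 : (n:ℝ) ≤ -1 := by exact_mod_cast h2
    linarith
  have habs : |s| ≠ 1 := by
    intro h
    rcases abs_eq (by norm_num : (0:ℝ) ≤ 1) |>.mp h with h1 | h1
    · -- s = 1, ξ = 1 - n
      have hn : (n : ℝ) = 1 - ξ := by linarith [h1]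
      have h1' : n < 1 := by exact_mod_cast (show (n:ℝ) < 1 by linarith)
      have h2 : n ≤ 0 := by omega
      have h3 : (n:ℝ) ≤ 0 := by exact_mod_cast h2
      linarith
    · -- s = -1
      have hn : (n : ℝ) = -1 - ξ := by linarith [h1]
      have h1' : n < -1 := by exact_mod_cast (show (n:ℝ) < -1 by linarith)
      have h2 : n ≤ -2 := by omega
      have h3 : (n:ℝ) ≤ -2 := by exact_mod_cast h2
      linarith
  have hcs : cww (κ * s) = cww (κ * |s|) := by
    rcases abs_choice s with h | h
    · rw [h]
    · rw [h, mul_neg, cww_even]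
  have habs0 : 0 < |s| := abs_pos.mpr hsne
  have hne : cww κ ≠ cww (κ * s) := by
    rw [hcs]
    rcases lt_trichotomy (|s|) 1 with h | h | h
    · have : κ * |s| < κ := by nlinarith
      exact ne_of_lt (cww_strictAnti (by positivity) this)
    · exact absurd h habs
    · have : κ < κ * |s| := by nlinarith
      exact ne_of_gt (cww_strictAnti hκ this)
  constructor
  · exact mul_ne_zero hsne (ne_of_gt (add_pos (cww_pos κ) (cww_pos (κ * s))))
  · exact mul_ne_zero hsne (sub_ne_zero.mpr hne)
end
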